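/- Let p be an odd prime, let n be an odd natural number with n ≥ 1, and set q = p^n. Then the group G_{q,2} is synchronizing. -/

import Mathlib

/-- A section of a partition: a set containing exactly one element of each part. -/
def IsSection {Ω : Type*} (P : Set (Set Ω)) (S : Set Ω) : Prop :=
  ∀ B ∈ P, ∃! x, x ∈ S ∧ x ∈ B

/-- A partition is `G`-regular if it admits a section `S` such that `Sg` is a
section for every `g ∈ G`. -/
def IsGRegular {Ω : Type*} (G : Subgroup (Equiv.Perm Ω)) (P : Set (Set Ω)) : Prop :=
  ∃ S : Set Ω, IsSection P S ∧ ∀ g ∈ G, IsSection P ((⇑g) '' S)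

/-- The trivial partitions: the one-block partition and the partition into singletons. -/
def IsTrivialPartition {Ω : Type*} (P : Set (Set Ω)) : Prop :=
  P = {Set.univ} ∨ P = Set.range (fun x : Ω => ({x} : Set Ω))

/-- A permutation group is transitive if any point can be mapped to any other. -/
def IsTransitivePermGroup {Ω : Type*} (G : Subgroup (Equiv.Perm Ω)) : Prop :=
  ∀ a b : Ω, ∃ g ∈ G, g a = b

/-- A partition is `G`-invariant if `G` permutes its parts. -/
def IsInvariantPartition {Ω : Type*} (G : Subgroup (Equiv.Perm Ω)) (P : Set (Set Ω)) : Prop :=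
  ∀ g ∈ G, ∀ B ∈ P, (⇑g) '' B ∈ P

/-- A permutation group is primitive if it is transitive and preserves no
non-trivial partition. -/
def IsPrimitivePermGroup {Ω : Type*} (G : Subgroup (Equiv.Perm Ω)) : Prop :=
  IsTransitivePermGroup G ∧
    ∀ P : Set (Set Ω), Setoid.IsPartition P → IsInvariantPartition G P → IsTrivialPartition P

/-- A permutation group is synchronizing if it is non-trivial and its only
`G`-regular partitions are the trivial ones. -/
def IsSynchronizing {Ω : Type*} (G : Subgroup (Equiv.Perm Ω)) : Prop :=
  G ≠ ⊥ ∧ ∀ P : Set (Set Ω), Setoid.IsPartition P → IsGRegular G P → IsTrivialPartition P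

/-- The set `S_{q,m}` of `m`-th powers of nonzero elements of a field. -/
def mthPowers (F : Type*) [Field F] (m : ℕ) : Set F :=
  {x : F | ∃ a : F, a ≠ 0 ∧ a ^ m = x}

/-- The group `G_{q,m} ≤ Sym(F)`, generated by all translations `x ↦ x + α` and the
multiplications `x ↦ x * α` for `α ∈ S_{q,m}`. -/
def Gqm (F : Type*) [Field F] (m : ℕ) : Subgroup (Equiv.Perm F) :=
  Subgroup.closure
    ((Set.range fun a : F => Equiv.addRight a) ∪
      {e : Equiv.Perm F | ∃ (a : F) (ha : a ≠ 0), a ∈ mthPowers F m ∧ e = Equiv.mulRight₀ a ha})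

private lemma sq_pow_odd_contra {p n k : ℕ} (hp : p.Prime) (hn : Odd n) (h : k ^ 2 = p ^ n) :
    False := by
  have hk : k ≠ 0 := by
    rintro rfl
    rw [zero_pow two_ne_zero] at h
    exact (pow_ne_zero n hp.pos.ne') h.symm
  have h2 := congrArg (fun m => m.factorization p) h
  simp only [Nat.factorization_pow, Finsupp.smul_apply, hp.factorization, Finsupp.single_eq_same,
    smul_eq_mul, mul_one] at h2
  obtain ⟨m, hm⟩ := hn
  omega

private lemma mem_Gqm_affine {F : Type*} [Field F] (c a : F) (hc0 : c ≠ 0) (hc : IsSquare c) :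
    (Equiv.mulRight₀ c hc0).trans (Equiv.addRight a) ∈ Gqm F 2 := by
  have h1 : Equiv.addRight a ∈ Gqm F 2 :=
    Subgroup.subset_closure (Or.inl ⟨a, rfl⟩)
  have h2 : Equiv.mulRight₀ c hc0 ∈ Gqm F 2 := by
    refine Subgroup.subset_closure (Or.inr ?_)
    obtain ⟨r, hr⟩ := hc
    have hr0 : r ≠ 0 := by rintro rfl; exact hc0 (by simp [hr])
    exact ⟨c, hc0, ⟨r, hr0, by rw [sq, hr]⟩, rfl⟩
  exact mul_mem h1 h2

private lemma gauss_eval {F E : Type*} [Field F] [Fintype F] [Field E]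
    {χ : MulChar F E} (hχ : χ ≠ 1) (hχq : χ.IsQuadratic) (ψ : AddChar F E) (z : F) :
    ∑ t : F, χ t * ψ (t * z) = χ z * gaussSum χ ψ := by
  rcases eq_or_ne z 0 with rfl | hz
  · simp only [mul_zero, AddChar.map_zero_eq_one, mul_one]
    rw [MulChar.sum_eq_zero_of_ne_one hχ, MulChar.map_zero, zero_mul]
  · have h := gaussSum_mulShift χ ψ (Units.mk0 z hz)
    have hne : χ z ≠ 0 := by
      intro h0
      have : χ z * χ z⁻¹ = 1 := by
        rw [← map_mul, mul_inv_cancel₀ hz, map_one]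
      rw [h0, zero_mul] at this
      exact zero_ne_one this
    have hsq : χ z * χ z = 1 := by
      rcases hχq z with h0 | h1 | hm1
      · exact absurd h0 hne
      · rw [h1]; ring
      · rw [hm1]; ring
    have h2 : gaussSum χ (AddChar.mulShift ψ z) = ∑ t : F, χ t * ψ (t * z) := by
      unfold gaussSum
      refine Finset.sum_congr rfl fun t _ => ?_
      rw [AddChar.mulShift_apply, mul_comm z t]
    calc ∑ t : F, χ t * ψ (t * z) = (χ z * χ z) * ∑ t : F, χ t * ψ (t * z) := by
          rw [hsq, one_mul]
      _ = χ z * gaussSum χ ψ := by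
          rw [mul_assoc, ← h2, ← h]
          simp [Units.val_mk0]

private lemma cover_sum {F E : Type*} [Field F] [Fintype F] [AddCommMonoid E]
    (S B : Finset F) (c : F)
    (hcov : ∀ a : F, ∃! zp : F × F, (zp.1 ∈ S ∧ zp.2 ∈ B) ∧ zp.2 - zp.1 * c = a)
    (φ : F → E) :
    ∑ pq ∈ S ×ˢ B, φ (pq.2 - pq.1 * c) = ∑ x : F, φ x := by
  refine Finset.sum_nbij' (fun pq => pq.2 - pq.1 * c)
    (fun a => (hcov a).exists.choose) ?_ ?_ ?_ ?_ ?_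
  · intro pq _; exact Finset.mem_univ _
  · intro a _
    have h := (hcov a).exists.choose_spec
    exact Finset.mem_product.mpr ⟨h.1.1, h.1.2⟩
  · intro pq hpq
    have h := Finset.mem_product.mp hpq
    exact (hcov (pq.2 - pq.1 * c)).unique ((hcov _).exists.choose_spec) ⟨⟨h.1, h.2⟩, rfl⟩
  · intro a _
    exact (hcov a).exists.choose_spec.2
  · intro pq _; rfl

/-- For `q = p^n` with `p` an odd prime and `n` odd, `G_{q,2}` is synchronizing. -/
theorem stmt19 (p n q : ℕ) (hp : p.Prime) (hpodd : Odd p) (hn : Odd n)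
    (hn1 : 1 ≤ n) (hq : q = p ^ n)
    (F : Type*) [Field F] [Fintype F] (hF : Fintype.card F = q) :
    IsSynchronizing (Gqm F 2) := by
  classical
  have hq0 : q ≠ 0 := by rw [hq]; exact pow_ne_zero n hp.pos.ne'
  have hqodd : Odd q := by rw [hq]; exact hpodd.pow
  constructor
  · -- the group is nontrivial
    intro hbot
    have h1 : Equiv.addRight (1 : F) ∈ Gqm F 2 := Subgroup.subset_closure (Or.inl ⟨1, rfl⟩)
    rw [hbot, Subgroup.mem_bot] at h1
    have h2 := congrArg (fun e : Equiv.Perm F => e 0) h1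
    simp at h2
  · intro P hpart hreg
    by_contra hnt
    rw [IsTrivialPartition, not_or] at hnt
    obtain ⟨hnt1, hnt2⟩ := hnt
    obtain ⟨S, _, hSg⟩ := hreg
    have hnonempty : ∀ ⦃C⦄, C ∈ P → C.Nonempty := fun C hC =>
      Set.nonempty_iff_ne_empty.mpr (fun h => hpart.1 (h ▸ hC))
    -- find a part with at least two elements
    have hBex : ∃ B ∈ P, ∃ x y, x ∈ B ∧ y ∈ B ∧ x ≠ y := by
      by_contra h
      push_neg at h
      apply hnt2
      ext C
      simp only [Set.mem_range]
      constructor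
      · intro hC
        obtain ⟨x, hx⟩ := hnonempty hC
        exact ⟨x, (Set.eq_singleton_iff_unique_mem.mpr
          ⟨hx, fun y hy => h C hC y x hy hx⟩).symm⟩
      · rintro ⟨x, rfl⟩
        obtain ⟨C', ⟨hC'P, hxC'⟩, _⟩ := hpart.2 x
        have hCx : C' = {x} := Set.eq_singleton_iff_unique_mem.mpr
          ⟨hxC', fun y hy => h C' hC'P y x hy hxC'⟩
        rw [← hCx]; exact hC'P
    obtain ⟨B, hB, x₀, x₂, hx₀, hx₂, hx02⟩ := hBex
    have hBuniv : B ≠ Set.univ := by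
      intro hBu
      apply hnt1
      ext C
      simp only [Set.mem_singleton_iff]
      constructor
      · intro hC
        obtain ⟨y, hy⟩ := hnonempty hC
        have := (hpart.2 y).unique ⟨hC, hy⟩ ⟨hB, by rw [hBu]; trivial⟩
        rw [this, hBu]
      · intro hC
        rw [hC, ← hBu]; exact hB
    obtain ⟨x₁, hx₁⟩ := (Set.ne_univ_iff_exists_notMem B).mp hBuniv
    -- characteristic facts
    haveI := ringChar.charP F
    have hchar : (ringChar F).Prime := CharP.char_is_prime F (ringChar F)
    have hF2 : ringChar F ≠ 2 := by
      intro h2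
      obtain ⟨m, _, hcard⟩ := FiniteField.card F (ringChar F)
      rw [hF, h2] at hcard
      have hodd := hqodd
      rw [hcard] at hodd
      have heven : Even (2 ^ (m : ℕ)) := Nat.even_pow.mpr ⟨even_two, m.pos.ne'⟩
      rw [Nat.even_iff] at heven
      rw [Nat.odd_iff] at hodd
      omega
    set E := ℂ with hE
    set ψ : AddChar F E := AddChar.FiniteField.primitiveChar_to_Complex F with hψdef
    have hψ : ψ.IsPrimitive := AddChar.FiniteField.primitiveChar_to_Complex_isPrimitive F
    set χ : MulChar F E := (quadraticChar F).ringHomComp (Int.castRingHom E) with hχdef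
    have hχq : χ.IsQuadratic := (quadraticChar_isQuadratic F).comp _
    have hχ1 : χ ≠ 1 := by
      obtain ⟨a, ha⟩ := quadraticChar_exists_neg_one' hF2
      intro h1
      have h2 := congrArg (fun χ' : MulChar F E => χ' (a : F)) h1
      simp only [hχdef, MulChar.ringHomComp_apply, MulChar.one_apply a.isUnit] at h2
      rw [ha] at h2
      norm_num at h2
    have hq_ne : (q : E) ≠ 0 := Nat.cast_ne_zero.mpr hq0
    -- finsets
    set Sf := S.toFinset with hSfdef
    set Bf := B.toFinset with hBfdef
    have hx₀' : x₀ ∈ Bf := Set.mem_toFinset.mpr hx₀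
    have hx₂' : x₂ ∈ Bf := Set.mem_toFinset.mpr hx₂
    have hx₁' : x₁ ∉ Bf := fun h => hx₁ (Set.mem_toFinset.mp h)
    -- the exact cover property coming from sections
    have hcov : ∀ c : F, c ≠ 0 → IsSquare c → ∀ a : F,
        ∃! zp : F × F, (zp.1 ∈ Sf ∧ zp.2 ∈ Bf) ∧ zp.2 - zp.1 * c = a := by
      intro c hc0 hcsq a
      obtain ⟨z, ⟨hzS, hzB⟩, huniq⟩ := hSg _ (mem_Gqm_affine c a hc0 hcsq) B hB
      obtain ⟨s, hsS, hsz⟩ := hzS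
      have hsz' : s * c + a = z := by
        simpa [Equiv.trans_apply] using hsz
      refine ⟨(s, z), ⟨⟨Set.mem_toFinset.mpr hsS, Set.mem_toFinset.mpr hzB⟩,
        by rw [← hsz']; ring⟩, ?_⟩
      rintro ⟨s', b'⟩ ⟨⟨hs'S, hb'B⟩, hzb⟩
      simp only at hzb
      have hb' : s' * c + a = b' := by rw [← hzb]; ring
      have hbz : b' = z := by
        refine huniq b' ⟨⟨s', Set.mem_toFinset.mp hs'S, ?_⟩, Set.mem_toFinset.mp hb'B⟩
        simpa [Equiv.trans_apply] using hb'
      have hss : s' = s := by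
        have hmul : s' * c = s * c := by
          have := hsz'
          rw [← hbz] at this
          have h2 := hb'
          rw [← this] at h2
          exact add_right_cancel h2
        exact mul_right_cancel₀ hc0 hmul
      simp [Prod.ext_iff, hss, hbz]
    -- the character-sum identity
    have hsum : ∀ c : F, c ≠ 0 → IsSquare c → ∀ t : F,
        (∑ b ∈ Bf, ψ (t * b)) * (∑ s ∈ Sf, ψ (-(c * t) * s)) =
          if t = 0 then (q : E) else 0 := by
      intro c hc0 hcsq t
      have h1 := cover_sum Sf Bf c (hcov c hc0 hcsq) (fun y => ψ (t * y))
      have h2 : ∑ x : F, ψ (t * x) = if t = 0 then (q : E) else 0 := by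
        simp_rw [mul_comm t]
        rw [AddChar.sum_mulShift _ hψ, hF]
        split_ifs <;> simp
      have h3 : ∑ pq ∈ Sf ×ˢ Bf, ψ (t * (pq.2 - pq.1 * c)) =
          (∑ b ∈ Bf, ψ (t * b)) * (∑ s ∈ Sf, ψ (-(c * t) * s)) := by
        rw [Finset.sum_product, mul_comm, Finset.sum_mul_sum]
        refine Finset.sum_congr rfl fun s _ => Finset.sum_congr rfl fun b _ => ?_
        rw [← AddChar.map_add_eq_mul]
        congr 1
        ring
      exact (h3.symm.trans h1).trans h2
    -- cardinality relation
    have hcard : Bf.card * Sf.card = q := by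
      have h := hsum 1 one_ne_zero IsSquare.one 0
      simp only [if_pos rfl, zero_mul, mul_zero, neg_zero, AddChar.map_zero_eq_one,
        Finset.sum_const, nsmul_eq_mul, mul_one, if_true] at h
      exact_mod_cast h
    -- Fourier inversion
    have hinv : ∀ (A : Finset F) (x : F),
        ∑ t : F, (∑ a ∈ A, ψ (t * a)) * ψ (t * (-x)) = if x ∈ A then (q : E) else 0 := by
      intro A x
      have h1 : ∀ t : F, (∑ a ∈ A, ψ (t * a)) * ψ (t * (-x)) = ∑ a ∈ A, ψ (t * (a - x)) := by
        intro t
        rw [Finset.sum_mul]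
        refine Finset.sum_congr rfl fun a _ => ?_
        rw [← AddChar.map_add_eq_mul]
        congr 1
        ring
      simp_rw [h1]
      rw [Finset.sum_comm]
      have h2 : ∀ a : F, ∑ t : F, ψ (t * (a - x)) = if a = x then (q : E) else 0 := by
        intro a
        rw [AddChar.sum_mulShift _ hψ, hF]
        simp [sub_eq_zero]
      simp_rw [h2]
      rw [Finset.sum_ite_eq' A x]
    -- main case analysis
    by_cases hsame : ∀ t₁, t₁ ≠ 0 → (∑ b ∈ Bf, ψ (t₁ * b)) ≠ 0 →
        ∀ t₂, t₂ ≠ 0 → (∑ b ∈ Bf, ψ (t₂ * b)) ≠ 0 →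
        quadraticChar F t₁ = quadraticChar F t₂
    · -- all nonvanishing frequencies lie in one square class
      by_cases hNe : ∃ ε, ε ≠ 0 ∧ (∑ b ∈ Bf, ψ (ε * b)) ≠ 0
      · obtain ⟨ε, hε0, hgε⟩ := hNe
        have hG : ∀ z : F, ∑ t : F, χ t * ψ (t * z) = χ z * gaussSum χ ψ :=
          gauss_eval hχ1 hχq ψ
        have main : ∀ x : F, gaussSum χ ψ * (∑ b ∈ Bf, χ (b - x)) =
            χ ε * ((if x ∈ Bf then (q : E) else 0) - (Bf.card : E)) := by
          intro x
          have ha : ∑ t : F, χ t * ((∑ b ∈ Bf, ψ (t * b)) * ψ (t * (-x))) =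
              (∑ b ∈ Bf, χ (b - x)) * gaussSum χ ψ := by
            calc ∑ t : F, χ t * ((∑ b ∈ Bf, ψ (t * b)) * ψ (t * (-x)))
                = ∑ t : F, ∑ b ∈ Bf, χ t * ψ (t * (b - x)) := by
                  refine Finset.sum_congr rfl fun t _ => ?_
                  rw [Finset.sum_mul, Finset.mul_sum]
                  refine Finset.sum_congr rfl fun b _ => ?_
                  rw [← AddChar.map_add_eq_mul]
                  congr 2
                  ring
              _ = ∑ b ∈ Bf, ∑ t : F, χ t * ψ (t * (b - x)) := Finset.sum_comm
              _ = ∑ b ∈ Bf, χ (b - x) * gaussSum χ ψ :=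
                  Finset.sum_congr rfl fun b _ => hG (b - x)
              _ = (∑ b ∈ Bf, χ (b - x)) * gaussSum χ ψ := by rw [Finset.sum_mul]
          have hterm : ∀ t : F, χ t * ((∑ b ∈ Bf, ψ (t * b)) * ψ (t * (-x))) =
              χ ε * ((∑ b ∈ Bf, ψ (t * b)) * ψ (t * (-x))) -
                (if t = 0 then χ ε * (Bf.card : E) else 0) := by
            intro t
            rcases eq_or_ne t 0 with rfl | ht
            · rw [if_pos rfl]
              have hzsum : (∑ b ∈ Bf, ψ ((0 : F) * b)) = (Bf.card : E) := by
                simp [AddChar.map_zero_eq_one]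
              rw [hzsum]
              simp [MulChar.map_zero, AddChar.map_zero_eq_one]
            · rw [if_neg ht, sub_zero]
              rcases eq_or_ne (∑ b ∈ Bf, ψ (t * b)) 0 with hz | hz
              · rw [hz]; ring
              · have hqc := hsame t ht hz ε hε0 hgε
                have hcast : χ t = χ ε := by
                  simp only [hχdef, MulChar.ringHomComp_apply]
                  rw [hqc]
                rw [hcast]
          have hb : ∑ t : F, χ t * ((∑ b ∈ Bf, ψ (t * b)) * ψ (t * (-x))) =
              χ ε * ((if x ∈ Bf then (q : E) else 0) - (Bf.card : E)) := by
            simp_rw [hterm]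
            rw [Finset.sum_sub_distrib, ← Finset.mul_sum, hinv Bf x,
              Finset.sum_ite_eq' Finset.univ (0 : F)]
            simp [mul_sub]
          rw [mul_comm (gaussSum χ ψ)]
          exact ha.symm.trans hb
        have h0 := main x₀
        rw [if_pos hx₀'] at h0
        have h1 := main x₁
        rw [if_neg hx₁'] at h1
        set m : ℤ := (∑ b ∈ Bf, quadraticChar F (b - x₀)) -
            (∑ b ∈ Bf, quadraticChar F (b - x₁)) with hm
        have hsub : gaussSum χ ψ * (m : E) = χ ε * (q : E) := by
          have hcombine : gaussSum χ ψ *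
              ((∑ b ∈ Bf, χ (b - x₀)) - (∑ b ∈ Bf, χ (b - x₁))) = χ ε * (q : E) := by
            rw [mul_sub, h0, h1]; ring
          rw [← hcombine]
          congr 1
          rw [hm]
          rw [Int.cast_sub, Int.cast_sum, Int.cast_sum]
          simp only [hχdef, MulChar.ringHomComp_apply, Int.coe_castRingHom]
        have hε2 : χ ε * χ ε = 1 := by
          rcases quadraticChar_dichotomy hε0 with h | h <;>
            · simp only [hχdef, MulChar.ringHomComp_apply, h]
              norm_num
        have hsq2 : χ (-1) * (q : E) * (m : E) ^ 2 = (q : E) ^ 2 := by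
          have h2 : (gaussSum χ ψ * (m : E)) ^ 2 = (χ ε * (q : E)) ^ 2 := by rw [hsub]
          calc χ (-1) * (q : E) * (m : E) ^ 2
              = (gaussSum χ ψ) ^ 2 * (m : E) ^ 2 := by
                rw [gaussSum_sq hχ1 hχq hψ, hF]
            _ = (χ ε) ^ 2 * (q : E) ^ 2 := by rw [← mul_pow, h2, mul_pow]
            _ = (q : E) ^ 2 := by rw [sq, hε2, one_mul]
        rcases quadraticChar_dichotomy (show (-1 : F) ≠ 0 from neg_ne_zero.mpr one_ne_zero)
          with hq1 | hq1
        · -- χ(-1) = 1 : then q is a perfect square, contradiction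
          have hx : χ (-1) = 1 := by
            simp only [hχdef, MulChar.ringHomComp_apply, hq1]
            norm_num
          rw [hx, one_mul] at hsq2
          have hmq : ((m ^ 2 : ℤ) : E) = ((q : ℤ) : E) := by
            rw [Int.cast_pow, Int.cast_natCast]
            have hcc : (q : E) * (m : E) ^ 2 = (q : E) * (q : E) := by
              linear_combination hsq2
            exact mul_left_cancel₀ hq_ne hcc
          have hzq : m ^ 2 = (q : ℤ) := Int.cast_injective hmq
          have hnat : m.natAbs ^ 2 = q := by
            have h := congrArg Int.natAbs hzq
            rwa [Int.natAbs_pow, Int.natAbs_natCast] at h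
          exact sq_pow_odd_contra hp hn (hq ▸ hnat)
        · -- χ(-1) = -1 : then -q is a square, impossible
          have hx : χ (-1) = -1 := by
            simp only [hχdef, MulChar.ringHomComp_apply, hq1]
            norm_num
          rw [hx] at hsq2
          have hmq : ((-(m ^ 2) : ℤ) : E) = ((q : ℤ) : E) := by
            rw [Int.cast_neg, Int.cast_pow, Int.cast_natCast]
            have hcc : (q : E) * (-(m : E) ^ 2) = (q : E) * (q : E) := by
              linear_combination hsq2
            exact mul_left_cancel₀ hq_ne hcc
          have hzq : -(m ^ 2) = (q : ℤ) := Int.cast_injective hmq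
          have hqpos : (0 : ℤ) < (q : ℤ) := by exact_mod_cast Nat.pos_of_ne_zero hq0
          nlinarith [sq_nonneg m]
      · -- the Fourier transform of B vanishes off 0 : B = univ, contradiction
        push_neg at hNe
        have heval : ∀ x : F,
            ∑ t : F, (∑ a ∈ Bf, ψ (t * a)) * ψ (t * (-x)) = (Bf.card : E) := by
          intro x
          rw [Finset.sum_eq_single 0]
          · simp [AddChar.map_zero_eq_one]
          · intro t _ ht
            rw [hNe t ht, zero_mul]
          · intro h; exact absurd (Finset.mem_univ 0) h
        have e0 : (Bf.card : E) = (q : E) := by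
          rw [← heval x₀, hinv Bf x₀, if_pos hx₀']
        have e1 : (Bf.card : E) = 0 := by
          rw [← heval x₁, hinv Bf x₁, if_neg hx₁']
        exact hq_ne (e0.symm.trans e1)
    · -- there are nonvanishing frequencies in both square classes :
      -- then the Fourier transform of S vanishes off 0, so S = univ and parts are singletons
      push_neg at hsame
      obtain ⟨t₁, ht₁, hg₁, t₂, ht₂, hg₂, h12⟩ := hsame
      have hfzero : ∀ u : F, u ≠ 0 → (∑ s ∈ Sf, ψ (u * s)) = 0 := by
        intro u hu
        have key : ∀ t : F, t ≠ 0 → (∑ b ∈ Bf, ψ (t * b)) ≠ 0 →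
            quadraticChar F (-(u * t⁻¹)) = 1 → (∑ s ∈ Sf, ψ (u * s)) = 0 := by
          intro t ht hgt hsq
          have hc0 : -(u * t⁻¹) ≠ 0 := by
            simp [hu, ht]
          have hcsq : IsSquare (-(u * t⁻¹)) := (quadraticChar_one_iff_isSquare hc0).mp hsq
          have h := hsum _ hc0 hcsq t
          rw [if_neg ht] at h
          have harg : -(-(u * t⁻¹) * t) = u := by
            field_simp
          rw [harg] at h
          exact (mul_eq_zero.mp h).resolve_left hgt
        have hc10 : -(u * t₁⁻¹) ≠ 0 := by simp [hu, ht₁]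
        have hc20 : -(u * t₂⁻¹) ≠ 0 := by simp [hu, ht₂]
        have hdiff : quadraticChar F (-(u * t₁⁻¹)) ≠ quadraticChar F (-(u * t₂⁻¹)) := by
          intro hEq
          apply h12
          have e1 : -(u * t₁⁻¹) * t₁ = -u := by field_simp
          have e2 : -(u * t₂⁻¹) * t₂ = -u := by field_simp
          have m1 : quadraticChar F (-(u * t₁⁻¹)) * quadraticChar F t₁ =
              quadraticChar F (-u) := by rw [← map_mul, e1]
          have m2 : quadraticChar F (-(u * t₂⁻¹)) * quadraticChar F t₂ =
              quadraticChar F (-u) := by rw [← map_mul, e2]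
          have hnz : quadraticChar F (-(u * t₁⁻¹)) ≠ 0 := by
            rw [Ne, quadraticChar_eq_zero_iff]
            exact hc10
          apply mul_left_cancel₀ hnz
          rw [m1]
          rw [← hEq] at m2
          exact m2.symm
        rcases quadraticChar_dichotomy hc10 with h1 | h1
        · exact key t₁ ht₁ hg₁ h1
        · rcases quadraticChar_dichotomy hc20 with h2 | h2
          · exact key t₂ ht₂ hg₂ h2
          · exact absurd (h1.trans h2.symm) hdiff
      have hSne : Sf.Nonempty := by
        rw [← Finset.card_pos]
        refine Nat.pos_of_ne_zero fun h => hq0 ?_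
        rw [← hcard, h, mul_zero]
      obtain ⟨s₀, hs₀⟩ := hSne
      have hL : ∑ t : F, (∑ a ∈ Sf, ψ (t * a)) * ψ (t * (-s₀)) = (Sf.card : E) := by
        rw [Finset.sum_eq_single 0]
        · simp [AddChar.map_zero_eq_one]
        · intro t _ ht
          rw [hfzero t ht, zero_mul]
        · intro h; exact absurd (Finset.mem_univ 0) h
      have hSq : (Sf.card : E) = (q : E) := by
        rw [← hL, hinv Sf s₀, if_pos hs₀]
      have hSqn : Sf.card = q := Nat.cast_injective (R := ℂ) hSq
      have hB1 : Bf.card = 1 := by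
        have h := hcard
        rw [hSqn] at h
        have hqpos : 0 < q := Nat.pos_of_ne_zero hq0
        exact Nat.eq_of_mul_eq_mul_right hqpos (by rw [h, one_mul])
      exact hx02 (Finset.card_le_one.mp (le_of_eq hB1) x₀ hx₀' x₂ hx₂')
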